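/- Ratios flip at most once (no-flip persists): in the discrete auto rate-tuning model with a constant learning rate, if R(i) > 1 and the ratio does not flip between steps i and i+1 (i.e. R(i+1) > 1), then R(i+j) > 1 for all j ≥ 1; the ratio never flips at any later step. -/
import Mathlib


/-- Ratios flip at most once (no-flip persists): with a constant learning rate,
if `R i > 1` and `R (i+1) > 1`, then `R (i+j) > 1` for all `j ≥ 1`. -/
theorem elr_ratio_no_flip_persists
    (cl ck : ℝ) (hcl : 0 < cl) (hck : 0 < ck)
    (lam : ℝ) (hlam : 0 < lam)
    (sl sk : ℕ → ℝ) (hsl0 : 0 < sl 0) (hsk0 : 0 < sk 0)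
    (hsl : ∀ i, sl (i + 1) = sl i + lam ^ 2 * cl ^ 2 / sl i)
    (hsk : ∀ i, sk (i + 1) = sk i + lam ^ 2 * ck ^ 2 / sk i)
    (R : ℕ → ℝ) (hR : ∀ i, R i = cl * sk i / (ck * sl i))
    (i : ℕ) (hRi : 1 < R i) (hRi1 : 1 < R (i + 1)) :
    ∀ j, 1 ≤ j → 1 < R (i + j) := by
  have hslpos : ∀ n, 0 < sl n := by
    intro n
    induction n with
    | zero => exact hsl0
    | succ m ih =>
      rw [hsl m]
      positivity
  have hskpos : ∀ n, 0 < sk n := by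
    intro n
    induction n with
    | zero => exact hsk0
    | succ m ih =>
      rw [hsk m]
      positivity
  have hsl_ge : ∀ n, 2 * lam * cl ≤ sl (n + 1) := by
    intro n
    rw [hsl n]
    have h := hslpos n
    rw [← sub_nonneg]
    have : sl n + lam ^ 2 * cl ^ 2 / sl n - 2 * lam * cl
        = (sl n - lam * cl) ^ 2 / sl n := by field_simp; ring
    rw [this]; positivity
  have hsk_ge : ∀ n, 2 * lam * ck ≤ sk (n + 1) := by
    intro n
    rw [hsk n]
    have h := hskpos n
    rw [← sub_nonneg]
    have : sk n + lam ^ 2 * ck ^ 2 / sk n - 2 * lam * ck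
        = (sk n - lam * ck) ^ 2 / sk n := by field_simp; ring
    rw [this]; positivity
  have hRiff : ∀ n, 1 < R n ↔ ck * sl n < cl * sk n := by
    intro n
    rw [hR n, lt_div_iff₀ (mul_pos hck (hslpos n)), one_mul]
  have key : ∀ n, 1 < R (n + 1) → 1 < R (n + 2) := by
    intro n h
    rw [hRiff] at h ⊢
    set a := sl (n + 1) with ha
    set b := sk (n + 1) with hb
    have hapos : 0 < a := hslpos (n + 1)
    have hbpos : 0 < b := hskpos (n + 1)
    have hage : 2 * lam * cl ≤ a := hsl_ge n
    have hbge : 2 * lam * ck ≤ b := hsk_ge n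
    have hsl2 : sl (n + 2) = a + lam ^ 2 * cl ^ 2 / a := hsl (n + 1)
    have hsk2 : sk (n + 2) = b + lam ^ 2 * ck ^ 2 / b := hsk (n + 1)
    rw [hsl2, hsk2]
    rw [← sub_pos]
    have hid : cl * (b + lam ^ 2 * ck ^ 2 / b) - ck * (a + lam ^ 2 * cl ^ 2 / a)
        = (cl * b - ck * a) * (a * b - lam ^ 2 * cl * ck) / (a * b) := by
      field_simp; ring
    rw [hid]
    have h1 : 0 < cl * b - ck * a := by linarith
    have hab : 2 * lam * cl * (2 * lam * ck) ≤ a * b :=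
      mul_le_mul hage hbge (by positivity) hapos.le
    have h2 : 0 < a * b - lam ^ 2 * cl * ck := by nlinarith [mul_pos hcl hck, mul_pos hlam hlam]
    positivity
  have claim : ∀ k, 1 < R (i + 1 + k) := by
    intro k
    induction k with
    | zero => exact hRi1
    | succ m ih =>
      have := key (i + m) (by convert ih using 2; ring)
      convert this using 2; ring
  intro j hj
  obtain ⟨k, rfl⟩ := Nat.exists_eq_add_of_le hj
  have := claim k
  convert this using 2
  ring
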